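/- For a, b, c measurable real-valued functions on a measure space D such that sgn(a(η)b(η)c(η)) is constant in η, define f(η; λ) = c(η)·[ (λ² - (a+b)²)/(λ² + (a+b)²)² - (λ² - (a-b)²)/(λ² + (a-b)²)² ] (with a = a(η), b = b(η)). If f(·; 0) is integrable on D and a(η)² ≠ b(η)² a.e. and all relevant denominators are nonzero, then lim_{λ → 0⁺} ∫_D f(η; λ) dη = ∫_D f(η; 0) dη. -/
import Mathlib

open MeasureTheory Filter

lemma poly_key (x s t : ℝ) (hx : 0 ≤ x) (hs : 0 < s) (ht : 0 < t) :
    |(t - s) * (3*x^2 + (s+t)*x - s*t)| * (s*t) ≤ 3 * |s - t| * ((x+s)^2 * (x+t)^2) := by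
  rw [abs_mul, abs_sub_comm t s]
  have hM : |3*x^2 + (s+t)*x - s*t| * (s*t) ≤ 3 * ((x+s)^2 * (x+t)^2) := by
    rcases abs_cases (3*x^2 + (s+t)*x - s*t) with ⟨h, _⟩ | ⟨h, _⟩ <;> rw [h] <;>
      nlinarith [mul_pos hs ht, sq_nonneg x, mul_nonneg hx hx, mul_nonneg (mul_nonneg hx hx) (mul_pos hs ht).le, mul_nonneg hx (mul_pos hs ht).le, sq_nonneg (x^2 + (s+t)*x), mul_nonneg (mul_nonneg hx hx) (mul_nonneg hx hs.le), mul_nonneg (mul_nonneg hx hx) (mul_nonneg hx ht.le)]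
  calc |s - t| * |3*x^2 + (s+t)*x - s*t| * (s*t)
      = |s - t| * (|3*x^2 + (s+t)*x - s*t| * (s*t)) := by ring
    _ ≤ |s - t| * (3 * ((x+s)^2 * (x+t)^2)) := by
        exact mul_le_mul_of_nonneg_left hM (abs_nonneg _)
    _ = 3 * |s - t| * ((x+s)^2 * (x+t)^2) := by ring

lemma key_ineq (x s t : ℝ) (hx : 0 ≤ x) (hs : 0 < s) (ht : 0 < t) :
    |(x - s)/(x+s)^2 - (x - t)/(x+t)^2| ≤ 3 * |1/t - 1/s| := by
  have hs2 : (0:ℝ) < (x+s)^2 := by positivity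
  have ht2 : (0:ℝ) < (x+t)^2 := by positivity
  have hst : (0:ℝ) < s*t := mul_pos hs ht
  have hD : (0:ℝ) < (x+s)^2 * (x+t)^2 := mul_pos hs2 ht2
  have hEq : (x - s)/(x+s)^2 - (x - t)/(x+t)^2
      = ((t-s)*(3*x^2+(s+t)*x-s*t))/((x+s)^2*(x+t)^2) := by
    field_simp
    ring
  have hEq2 : 1/t - 1/s = (s-t)/(s*t) := by
    rw [div_sub_div _ _ ht.ne' hs.ne', one_mul, mul_one, mul_comm t s]
  rw [hEq, hEq2, abs_div, abs_div, abs_of_pos hD, abs_of_pos hst, ← mul_div_assoc,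
    div_le_div_iff₀ hD hst]
  exact poly_key x s t hx hs ht

theorem dominated_convergence_corollary {α : Type*} [MeasureSpace α]
    (a b c : α → ℝ)
    (ha : Measurable a) (hb : Measurable b) (hc : Measurable c)
    (hsgn : ∀ η η' : α,
      Real.sign (a η * b η * c η) = Real.sign (a η' * b η' * c η'))
    (hne : ∀ᵐ η : α, a η ^ 2 ≠ b η ^ 2)
    (hint : Integrable (fun η : α =>
      c η * (((0:ℝ) ^ 2 - (a η + b η) ^ 2) / ((0:ℝ) ^ 2 + (a η + b η) ^ 2) ^ 2 -
        ((0:ℝ) ^ 2 - (a η - b η) ^ 2) / ((0:ℝ) ^ 2 + (a η - b η) ^ 2) ^ 2))) :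
    Tendsto
      (fun lam : ℝ => ∫ η : α,
        c η * ((lam ^ 2 - (a η + b η) ^ 2) / (lam ^ 2 + (a η + b η) ^ 2) ^ 2 -
          (lam ^ 2 - (a η - b η) ^ 2) / (lam ^ 2 + (a η - b η) ^ 2) ^ 2))
      (nhdsWithin 0 (Set.Ioi 0))
      (nhds (∫ η : α,
        c η * (((0:ℝ) ^ 2 - (a η + b η) ^ 2) / ((0:ℝ) ^ 2 + (a η + b η) ^ 2) ^ 2 -
          ((0:ℝ) ^ 2 - (a η - b η) ^ 2) / ((0:ℝ) ^ 2 + (a η - b η) ^ 2) ^ 2))) := by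
  apply tendsto_integral_filter_of_dominated_convergence
    (bound := fun η => 3 * ‖c η * (((0:ℝ) ^ 2 - (a η + b η) ^ 2) / ((0:ℝ) ^ 2 + (a η + b η) ^ 2) ^ 2 -
        ((0:ℝ) ^ 2 - (a η - b η) ^ 2) / ((0:ℝ) ^ 2 + (a η - b η) ^ 2) ^ 2)‖)
  · refine Eventually.of_forall fun lam => ?_
    apply Measurable.aestronglyMeasurable
    exact hc.mul (((measurable_const.sub ((ha.add hb).pow_const 2)).div
        (((measurable_const.add ((ha.add hb).pow_const 2)).pow_const 2))).sub
      ((measurable_const.sub ((ha.sub hb).pow_const 2)).div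
        (((measurable_const.add ((ha.sub hb).pow_const 2)).pow_const 2))))
  · refine Eventually.of_forall fun lam => hne.mono fun η hη => ?_
    have h1 : a η + b η ≠ 0 := by
      intro h
      apply hη
      have : a η = -b η := by linarith
      rw [this]; ring
    have h2 : a η - b η ≠ 0 := by
      intro h
      apply hη
      have : a η = b η := by linarith
      rw [this]
    have hs : (0:ℝ) < (a η + b η)^2 := pow_two_pos_of_ne_zero h1
    have ht : (0:ℝ) < (a η - b η)^2 := pow_two_pos_of_ne_zero h2
    have hG0 : ((0:ℝ) ^ 2 - (a η + b η) ^ 2) / ((0:ℝ) ^ 2 + (a η + b η) ^ 2) ^ 2 -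
        ((0:ℝ) ^ 2 - (a η - b η) ^ 2) / ((0:ℝ) ^ 2 + (a η - b η) ^ 2) ^ 2
        = 1/(a η - b η)^2 - 1/(a η + b η)^2 := by
      field_simp
      ring
    have hb1 : |(lam ^ 2 - (a η + b η) ^ 2) / (lam ^ 2 + (a η + b η) ^ 2) ^ 2 -
          (lam ^ 2 - (a η - b η) ^ 2) / (lam ^ 2 + (a η - b η) ^ 2) ^ 2|
        ≤ 3 * |((0:ℝ) ^ 2 - (a η + b η) ^ 2) / ((0:ℝ) ^ 2 + (a η + b η) ^ 2) ^ 2 -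
          ((0:ℝ) ^ 2 - (a η - b η) ^ 2) / ((0:ℝ) ^ 2 + (a η - b η) ^ 2) ^ 2| := by
      rw [hG0]
      exact key_ineq (lam^2) _ _ (sq_nonneg lam) hs ht
    rw [Real.norm_eq_abs, Real.norm_eq_abs, abs_mul, abs_mul]
    calc |c η| * |(lam ^ 2 - (a η + b η) ^ 2) / (lam ^ 2 + (a η + b η) ^ 2) ^ 2 -
          (lam ^ 2 - (a η - b η) ^ 2) / (lam ^ 2 + (a η - b η) ^ 2) ^ 2|
        ≤ |c η| * (3 * |((0:ℝ) ^ 2 - (a η + b η) ^ 2) / ((0:ℝ) ^ 2 + (a η + b η) ^ 2) ^ 2 -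
          ((0:ℝ) ^ 2 - (a η - b η) ^ 2) / ((0:ℝ) ^ 2 + (a η - b η) ^ 2) ^ 2|) :=
          mul_le_mul_of_nonneg_left hb1 (abs_nonneg _)
      _ = 3 * (|c η| * |((0:ℝ) ^ 2 - (a η + b η) ^ 2) / ((0:ℝ) ^ 2 + (a η + b η) ^ 2) ^ 2 -
          ((0:ℝ) ^ 2 - (a η - b η) ^ 2) / ((0:ℝ) ^ 2 + (a η - b η) ^ 2) ^ 2|) := by ring
  · exact hint.norm.const_mul 3
  · refine hne.mono fun η hη => ?_
    have h1 : a η + b η ≠ 0 := by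
      intro h
      apply hη
      have : a η = -b η := by linarith
      rw [this]; ring
    have h2 : a η - b η ≠ 0 := by
      intro h
      apply hη
      have : a η = b η := by linarith
      rw [this]
    have hs : (0:ℝ) < (a η + b η)^2 := pow_two_pos_of_ne_zero h1
    have ht : (0:ℝ) < (a η - b η)^2 := pow_two_pos_of_ne_zero h2
    have hd1 : ((0:ℝ)^2 + (a η + b η)^2)^2 ≠ 0 := by positivity
    have hd2 : ((0:ℝ)^2 + (a η - b η)^2)^2 ≠ 0 := by positivity
    have hcont : ContinuousAt (fun lam : ℝ =>
        c η * ((lam ^ 2 - (a η + b η) ^ 2) / (lam ^ 2 + (a η + b η) ^ 2) ^ 2 -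
          (lam ^ 2 - (a η - b η) ^ 2) / (lam ^ 2 + (a η - b η) ^ 2) ^ 2)) 0 := by
      apply ContinuousAt.mul continuousAt_const
      apply ContinuousAt.sub
      · exact ContinuousAt.div (by fun_prop) (by fun_prop) hd1
      · exact ContinuousAt.div (by fun_prop) (by fun_prop) hd2
    exact hcont.tendsto.mono_left nhdsWithin_le_nhds
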